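/- (Meyer's theorem, bounded case.) Let d = d_Z + d_R, let P = {z ∈ ℝ^d : a_i⋅z ≤ b_i, i = 1,…,n} be a bounded polyhedron given by finitely many linear inequalities, and let S = P ∩ (ℤ^{d_Z} × ℝ^{d_R}) = {z ∈ P : z_k ∈ ℤ for all k = 1,…,d_Z}. Then conv(S) is a polytope: there exists a finite set F ⊆ ℝ^d with conv(S) = conv(F). -/

import Mathlib

open Set

/-- Extreme points of a polyhedron are finite. -/
theorem extremePoints_poly_finite {d : ℕ} {ι : Type} [Finite ι]
    (c : ι → Fin d → ℝ) (b : ι → ℝ) :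
    (({z : Fin d → ℝ | ∀ i, ∑ j, c i j * z j ≤ b i}).extremePoints ℝ).Finite := by
  classical
  set P : Set (Fin d → ℝ) := {z | ∀ i, ∑ j, c i j * z j ≤ b i} with hPdef
  have hlin : ∀ (i : ι) (x v : Fin d → ℝ) (t : ℝ),
      (∑ j, c i j * (x + t • v) j) = (∑ j, c i j * x j) + t * ∑ j, c i j * v j := by
    intro i x v t
    rw [Finset.mul_sum, ← Finset.sum_add_distrib]
    refine Finset.sum_congr rfl fun j _ => ?_
    simp only [Pi.add_apply, Pi.smul_apply, smul_eq_mul]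
    ring
  rw [← Set.finite_coe_iff]
  refine Finite.of_injective
    (fun x : P.extremePoints ℝ => {i : ι | ∑ j, c i j * (x : Fin d → ℝ) j = b i}) ?_
  rintro ⟨x, hx⟩ ⟨y, hy⟩ hxy
  simp only [Subtype.mk.injEq]
  by_contra hne
  have hxP : x ∈ P := extremePoints_subset hx
  have hyP : y ∈ P := extremePoints_subset hy
  set v : Fin d → ℝ := y - x with hv
  have hvne : v ≠ 0 := sub_ne_zero.mpr (fun h => hne h.symm)
  have hact : ∀ i, (∑ j, c i j * x j = b i) ↔ (∑ j, c i j * y j = b i) :=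
    fun i => Set.ext_iff.mp hxy i
  have hfv : ∀ i, (∑ j, c i j * x j = b i) → (∑ j, c i j * v j) = 0 := by
    intro i hi
    have hy' : y = x + (1 : ℝ) • v := by simp [hv]
    have := hlin i x v 1
    rw [← hy'] at this
    have hyi := (hact i).mp hi
    rw [hyi, hi] at this
    linarith
  -- the set of points strictly satisfying all constraints inactive at x
  set U : Set (Fin d → ℝ) :=
    ⋂ i, {z | (∑ j, c i j * x j < b i) → ∑ j, c i j * z j < b i} with hU
  have hUopen : IsOpen U := by
    refine isOpen_iInter_of_finite fun i => ?_
    by_cases h : ∑ j, c i j * x j < b i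
    · have : {z : Fin d → ℝ | (∑ j, c i j * x j < b i) → ∑ j, c i j * z j < b i}
          = {z | ∑ j, c i j * z j < b i} := by ext z; simp [h]
      rw [this]
      exact isOpen_lt (continuous_finset_sum _ fun j _ =>
        (continuous_const.mul (continuous_apply j))) continuous_const
    · have : {z : Fin d → ℝ | (∑ j, c i j * x j < b i) → ∑ j, c i j * z j < b i}
          = univ := by ext z; simp [h]
      rw [this]; exact isOpen_univ
  have hg : Continuous fun t : ℝ => x + t • v :=
    continuous_const.add (continuous_id.smul continuous_const)
  have h0 : (0 : ℝ) ∈ (fun t : ℝ => x + t • v) ⁻¹' U := by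
    simp only [Set.mem_preimage, hU, Set.mem_iInter]
    intro i hi
    simpa using hi
  obtain ⟨ε, hε, hball⟩ := Metric.isOpen_iff.mp (hUopen.preimage hg) 0 h0
  set t : ℝ := ε / 2 with ht
  have htpos : 0 < t := by positivity
  have hmem : ∀ s : ℝ, |s| < ε → x + s • v ∈ P := by
    intro s hs
    have hsU : x + s • v ∈ U := hball (by simpa [Real.dist_eq] using hs)
    intro i
    rcases lt_or_eq_of_le (hxP i) with h | h
    · exact le_of_lt (Set.mem_iInter.mp hsU i h)
    · rw [hlin i x v s, h, hfv i h]
      simp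
  have h1 : x + t • v ∈ P := hmem t (by rw [abs_of_pos htpos]; linarith)
  have h2 : x + (-t) • v ∈ P := hmem (-t) (by rw [abs_neg, abs_of_pos htpos]; linarith)
  have hseg : x ∈ openSegment ℝ (x + (-t) • v) (x + t • v) := by
    refine ⟨1/2, 1/2, by norm_num, by norm_num, by norm_num, ?_⟩
    module
  have heq : x + (-t) • v = x := hx.2 h2 h1 hseg
  have hzero : (-t) • v = 0 := by
    have h' := congrArg (fun w => w - x) heq
    simpa using h'
  rcases smul_eq_zero.mp hzero with h | h
  · exact absurd (neg_eq_zero.mp h) (ne_of_gt htpos)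
  · exact hvne h

open Set

lemma sum_ite_coord {d : ℕ} (k : Fin d) (s : ℝ) (z : Fin d → ℝ) :
    ∑ j, (if j = k then s else 0) * z j = s * z k := by
  simp [ite_mul, Finset.sum_ite_eq']

/-- Meyer's theorem (bounded case): if `P = {z : a_i ⋅ z ≤ b_i, i = 1,…,n}` is a
bounded polyhedron in `ℝ^d` with `d = d_Z + d_R`, and
`S = {z ∈ P : z_k ∈ ℤ for k = 1,…,d_Z}`, then `conv(S)` is a polytope, i.e.
the convex hull of a finite set. -/
theorem meyer_bounded (dZ dR d n : ℕ) (hd : d = dZ + dR)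
    (a : Fin n → Fin d → ℝ) (b : Fin n → ℝ)
    (P : Set (Fin d → ℝ)) (hP : P = {z | ∀ i : Fin n, ∑ j, a i j * z j ≤ b i})
    (hbnd : Bornology.IsBounded P)
    (S : Set (Fin d → ℝ))
    (hS : S = {z ∈ P | ∀ k : Fin d, (k : ℕ) < dZ → ∃ m : ℤ, z k = (m : ℝ)}) :
    ∃ F : Finset (Fin d → ℝ), convexHull ℝ S = convexHull ℝ (F : Set (Fin d → ℝ)) := by
  classical
  obtain ⟨R₀, hR₀⟩ := hbnd.exists_norm_le
  set R : ℝ := max R₀ 0 with hRdef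
  have hR : ∀ z ∈ P, ∀ k, |z k| ≤ R := by
    intro z hz k
    calc |z k| = ‖z k‖ := rfl
      _ ≤ ‖z‖ := norm_le_pi_norm z k
      _ ≤ R₀ := hR₀ z hz
      _ ≤ R := le_max_left _ _
  have hRnn : 0 ≤ R := le_max_right _ _
  -- convexity of P
  have hPconv : Convex ℝ P := by
    rw [hP]
    intro z1 h1 z2 h2 p q hp hq hpq
    intro i
    have e : ∑ j, a i j * (p • z1 + q • z2) j
        = p * (∑ j, a i j * z1 j) + q * (∑ j, a i j * z2 j) := by
      rw [Finset.mul_sum, Finset.mul_sum, ← Finset.sum_add_distrib]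
      refine Finset.sum_congr rfl fun j _ => ?_
      simp only [Pi.add_apply, Pi.smul_apply, smul_eq_mul]; ring
    simp only [Set.mem_setOf_eq] at h1 h2 ⊢
    rw [e]
    calc p * (∑ j, a i j * z1 j) + q * (∑ j, a i j * z2 j)
        ≤ p * b i + q * b i :=
          add_le_add (mul_le_mul_of_nonneg_left (h1 i) hp)
            (mul_le_mul_of_nonneg_left (h2 i) hq)
      _ = b i := by rw [← add_mul, hpq, one_mul]
  have hPclosed : IsClosed P := by
    rw [hP]
    have e : {z : Fin d → ℝ | ∀ i, ∑ j, a i j * z j ≤ b i}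
        = ⋂ i, {z | ∑ j, a i j * z j ≤ b i} := by ext z; simp
    rw [e]
    exact isClosed_iInter fun i => isClosed_le
      (continuous_finset_sum _ fun j _ => continuous_const.mul (continuous_apply j))
      continuous_const
  -- slices
  set slice : (Fin d → ℤ) → Set (Fin d → ℝ) :=
    fun v => {z | z ∈ P ∧ ∀ k : Fin d, (k : ℕ) < dZ → z k = (v k : ℝ)} with hslice
  -- each slice is a polyhedron, so has finitely many extreme points
  have hEfin : ∀ v, ((slice v).extremePoints ℝ).Finite := by
    intro v
    set c' : (Fin n ⊕ Fin d × Bool) → Fin d → ℝ :=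
      Sum.elim a (fun p j => if (p.1 : ℕ) < dZ ∧ j = p.1 then (if p.2 then (1:ℝ) else -1) else 0)
      with hc'
    set b' : (Fin n ⊕ Fin d × Bool) → ℝ :=
      Sum.elim b (fun p => if (p.1 : ℕ) < dZ then (if p.2 then (v p.1 : ℝ) else -(v p.1 : ℝ)) else 0)
      with hb'
    have hsum : ∀ (k : Fin d) (hk : (k : ℕ) < dZ) (s : ℝ) (z : Fin d → ℝ),
        ∑ j, (if (k : ℕ) < dZ ∧ j = k then s else 0) * z j = s * z k := by
      intro k hk s z
      rw [← sum_ite_coord k s z]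
      refine Finset.sum_congr rfl fun j _ => ?_
      simp [hk]
    have hrep : slice v = {z | ∀ i, ∑ j, c' i j * z j ≤ b' i} := by
      ext z
      simp only [hslice, Set.mem_setOf_eq]
      constructor
      · rintro ⟨hzP, hzint⟩ i
        rcases i with i | ⟨k, β⟩
        · rw [hP] at hzP; exact hzP i
        · by_cases hk : (k : ℕ) < dZ
          · rcases β with _ | _
            · simp only [hc', hb', Sum.elim_inr, hsum k hk, if_pos hk]
              rw [hzint k hk]; simp
            · simp only [hc', hb', Sum.elim_inr, hsum k hk, if_pos hk]
              rw [hzint k hk]; simp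
          · simp only [hc', hb', Sum.elim_inr, if_neg hk]
            have e : ∀ j : Fin d, (if (k : ℕ) < dZ ∧ j = k then (if β then (1:ℝ) else -1) else 0) = 0 := by
              intro j; simp [hk]
            simp [e]
      · intro h
        constructor
        · rw [hP]; intro i; exact h (Sum.inl i)
        · intro k hk
          have h1 := h (Sum.inr (k, true))
          have h2 := h (Sum.inr (k, false))
          simp only [hc', hb', Sum.elim_inr, hsum k hk, if_pos hk] at h1 h2
          simp only [if_pos] at h1 h2
          norm_num at h1 h2
          linarith
    rw [hrep]
    exact extremePoints_poly_finite c' b'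
  -- each slice is compact and convex
  have hsliceclosed : ∀ v, IsClosed (slice v) := by
    intro v
    have e : slice v = P ∩ ⋂ k : Fin d, {z | (k : ℕ) < dZ → z k = (v k : ℝ)} := by
      ext z; simp [hslice]
    rw [e]
    refine hPclosed.inter (isClosed_iInter fun k => ?_)
    by_cases hk : (k : ℕ) < dZ
    · have e2 : {z : Fin d → ℝ | (k : ℕ) < dZ → z k = (v k : ℝ)} = {z | z k = (v k : ℝ)} := by
        ext z; simp [hk]
      rw [e2]; exact isClosed_eq (continuous_apply k) continuous_const
    · have e2 : {z : Fin d → ℝ | (k : ℕ) < dZ → z k = (v k : ℝ)} = Set.univ := by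
        ext z; simp [hk]
      rw [e2]; exact isClosed_univ
  have hsliceconv : ∀ v, Convex ℝ (slice v) := by
    intro v z1 hz1 z2 hz2 p q hp hq hpq
    refine ⟨hPconv hz1.1 hz2.1 hp hq hpq, fun k hk => ?_⟩
    have e : (p • z1 + q • z2) k = p * z1 k + q * z2 k := by
      simp [smul_eq_mul]
    rw [e, hz1.2 k hk, hz2.2 k hk, ← add_mul, hpq, one_mul]
  have hslicecomp : ∀ v, IsCompact (slice v) := fun v =>
    Metric.isCompact_of_isClosed_isBounded (hsliceclosed v)
      (hbnd.subset fun z hz => hz.1)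
  have hsliceE : ∀ v, slice v = convexHull ℝ ((slice v).extremePoints ℝ) := by
    intro v
    rw [← (((hEfin v).isCompact_convexHull (𝕜 := ℝ)).isClosed.closure_eq)]
    exact (closure_convexHull_extremePoints (hslicecomp v) (hsliceconv v)).symm
  -- finite index set of integer vectors
  set M : ℤ := ⌈R⌉ with hM
  set V : Set (Fin d → ℤ) := Set.pi Set.univ (fun _ => Set.Icc (-M) M) with hV
  have hVfin : V.Finite := Set.Finite.pi fun _ => Set.finite_Icc _ _
  set F0 : Set (Fin d → ℝ) := ⋃ v ∈ V, (slice v).extremePoints ℝ with hF0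
  have hF0fin : F0.Finite := hVfin.biUnion fun v _ => hEfin v
  refine ⟨hF0fin.toFinset, ?_⟩
  rw [hF0fin.coe_toFinset]
  apply subset_antisymm
  · refine convexHull_min ?_ (convex_convexHull ℝ _)
    intro z hz
    rw [hS] at hz
    obtain ⟨hzP, hzint⟩ := hz
    set v : Fin d → ℤ := fun k => if h : (k : ℕ) < dZ then (hzint k h).choose else 0 with hvdef
    have hzslice : z ∈ slice v := by
      refine ⟨hzP, fun k hk => ?_⟩
      simp only [hvdef, dif_pos hk]
      exact (hzint k hk).choose_spec
    have hvV : v ∈ V := by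
      intro k _
      have hb : |(v k : ℝ)| ≤ R := by
        by_cases hk : (k : ℕ) < dZ
        · simp only [hvdef, dif_pos hk]
          rw [← (hzint k hk).choose_spec]
          exact hR z hzP k
        · simp only [hvdef, dif_neg hk]
          simpa using hRnn
      have hM' : |(v k : ℝ)| ≤ (M : ℝ) := hb.trans (Int.le_ceil R)
      rw [abs_le] at hM'
      constructor
      · exact_mod_cast hM'.1
      · exact_mod_cast hM'.2
    have h1 : z ∈ convexHull ℝ ((slice v).extremePoints ℝ) := by
      rw [← hsliceE v]; exact hzslice
    exact convexHull_mono (Set.subset_biUnion_of_mem hvV) h1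
  · apply convexHull_mono
    intro z hz
    simp only [hF0, Set.mem_iUnion] at hz
    obtain ⟨v, _, hz⟩ := hz
    have hzs := extremePoints_subset hz
    rw [hS]
    exact ⟨hzs.1, fun k hk => ⟨v k, hzs.2 k hk⟩⟩
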